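/- Let R be a commutative local ring. The following are equivalent: (1) K_1(R) (i.e., the 2×2 matrix ring M₂(R)) is quasipolar; (2) K_1(R) is strongly clean; (3) K_s(R) is strongly clean for all s ∈ R; (4) K_s(R) is strongly clean for all s ∈ J(R). -/

import Mathlib

/-- The generalized matrix ring `K_s(R)` with multiplier `s`. -/
@[ext]
structure GenMatrix (R : Type*) (s : R) where
  a : R
  b : R
  c : R
  d : R

namespace GenMatrix

variable {R : Type*} [Ring R] {s : R}

instance : Add (GenMatrix R s) :=
  ⟨fun X Y => ⟨X.a + Y.a, X.b + Y.b, X.c + Y.c, X.d + Y.d⟩⟩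
instance : Neg (GenMatrix R s) := ⟨fun X => ⟨-X.a, -X.b, -X.c, -X.d⟩⟩
instance : Zero (GenMatrix R s) := ⟨⟨0, 0, 0, 0⟩⟩
instance : One (GenMatrix R s) := ⟨⟨1, 0, 0, 1⟩⟩
instance : Mul (GenMatrix R s) :=
  ⟨fun X Y => ⟨X.a * Y.a + s * (X.b * Y.c), X.a * Y.b + X.b * Y.d,
    X.c * Y.a + X.d * Y.c, s * (X.c * Y.b) + X.d * Y.d⟩⟩

@[simp] lemma add_a (X Y : GenMatrix R s) : (X + Y).a = X.a + Y.a := rfl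
@[simp] lemma add_b (X Y : GenMatrix R s) : (X + Y).b = X.b + Y.b := rfl
@[simp] lemma add_c (X Y : GenMatrix R s) : (X + Y).c = X.c + Y.c := rfl
@[simp] lemma add_d (X Y : GenMatrix R s) : (X + Y).d = X.d + Y.d := rfl
@[simp] lemma neg_a (X : GenMatrix R s) : (-X).a = -X.a := rfl
@[simp] lemma neg_b (X : GenMatrix R s) : (-X).b = -X.b := rfl
@[simp] lemma neg_c (X : GenMatrix R s) : (-X).c = -X.c := rfl
@[simp] lemma neg_d (X : GenMatrix R s) : (-X).d = -X.d := rfl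
@[simp] lemma zero_a : (0 : GenMatrix R s).a = 0 := rfl
@[simp] lemma zero_b : (0 : GenMatrix R s).b = 0 := rfl
@[simp] lemma zero_c : (0 : GenMatrix R s).c = 0 := rfl
@[simp] lemma zero_d : (0 : GenMatrix R s).d = 0 := rfl
@[simp] lemma one_a : (1 : GenMatrix R s).a = 1 := rfl
@[simp] lemma one_b : (1 : GenMatrix R s).b = 0 := rfl
@[simp] lemma one_c : (1 : GenMatrix R s).c = 0 := rfl
@[simp] lemma one_d : (1 : GenMatrix R s).d = 1 := rfl
@[simp] lemma mul_a (X Y : GenMatrix R s) : (X * Y).a = X.a * Y.a + s * (X.b * Y.c) := rfl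
@[simp] lemma mul_b (X Y : GenMatrix R s) : (X * Y).b = X.a * Y.b + X.b * Y.d := rfl
@[simp] lemma mul_c (X Y : GenMatrix R s) : (X * Y).c = X.c * Y.a + X.d * Y.c := rfl
@[simp] lemma mul_d (X Y : GenMatrix R s) : (X * Y).d = s * (X.c * Y.b) + X.d * Y.d := rfl

instance : AddCommGroup (GenMatrix R s) where
  add_assoc X Y Z := by ext <;> simp [add_assoc]
  zero_add X := by ext <;> simp
  add_zero X := by ext <;> simp
  add_comm X Y := by ext <;> simp [add_comm]
  neg_add_cancel X := by ext <;> simp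
  nsmul := nsmulRec
  zsmul := zsmulRec

section Central

variable [Fact (s ∈ Set.center R)]

lemma scomm (r : R) : r * s = s * r := Semigroup.mem_center_iff.mp Fact.out r

lemma sshift (r t : R) : r * (s * t) = s * (r * t) := by
  rw [← mul_assoc, scomm (s := s), mul_assoc]

instance : Ring (GenMatrix R s) where
  __ := (inferInstance : AddCommGroup (GenMatrix R s))
  left_distrib X Y Z := by ext <;> simp [mul_add, add_mul] <;> abel
  right_distrib X Y Z := by ext <;> simp [mul_add, add_mul] <;> abel
  zero_mul X := by ext <;> simp
  mul_zero X := by ext <;> simp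
  mul_assoc X Y Z := by
    ext <;> simp only [mul_a, mul_b, mul_c, mul_d, mul_add, add_mul, mul_assoc, sshift] <;> abel
  one_mul X := by ext <;> simp
  mul_one X := by ext <;> simp

end Central

instance central_of_comm {R : Type*} [CommRing R] (s : R) : Fact (s ∈ Set.center R) :=
  ⟨by rw [Set.center_eq_univ]; trivial⟩

/-- `det_s` of a generalized matrix over a commutative ring. -/
def dets {R : Type*} {s : R} [CommRing R] (A : GenMatrix R s) : R :=
  A.a * A.d - s * (A.b * A.c)

/-- The trace of a generalized matrix. -/
def tr {R : Type*} {s : R} [Ring R] (A : GenMatrix R s) : R := A.a + A.d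

end GenMatrix

/-- An element `a` is quasinilpotent if `1 + a*x` is a unit for every `x` commuting with `a`. -/
def IsQuasinilpotent {R : Type*} [Ring R] (a : R) : Prop :=
  ∀ x : R, a * x = x * a → IsUnit (1 + a * x)

/-- An element `a` is quasipolar if there is an idempotent `p` in the double commutant of `a`
with `a + p` a unit and `a * p` quasinilpotent. -/
def IsQuasipolar {R : Type*} [Ring R] (a : R) : Prop :=
  ∃ p : R, IsIdempotentElem p ∧ (∀ y : R, y * a = a * y → p * y = y * p) ∧
    IsUnit (a + p) ∧ IsQuasinilpotent (a * p)

/-- A ring is quasipolar if every element is quasipolar. -/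
def IsQuasipolarRing (R : Type*) [Ring R] : Prop := ∀ a : R, IsQuasipolar a

/-- An element is strongly clean if it is the sum of an idempotent and a unit that commute. -/
def IsStronglyClean {R : Type*} [Ring R] (a : R) : Prop :=
  ∃ e u : R, IsIdempotentElem e ∧ IsUnit u ∧ a = e + u ∧ e * u = u * e

/-- A ring is strongly clean if every element is strongly clean. -/
def IsStronglyCleanRing (R : Type*) [Ring R] : Prop := ∀ a : R, IsStronglyClean a

/-- `a` is similar to `b` if `b = u⁻¹ * a * u` for some unit `u`. -/
def IsSimilar {R : Type*} [Ring R] (a b : R) : Prop :=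
  ∃ u : Rˣ, b = ↑u⁻¹ * a * ↑u

/-- The Jacobson radical of a ring: the intersection of all maximal left ideals. -/
def JacobsonRadical (R : Type*) [Ring R] : Ideal R := Ideal.jacobson ⊥

section Aux

open IsLocalRing

namespace GenMatrix

variable {R : Type*} [CommRing R] {s : R}

lemma dets_one : dets (1 : GenMatrix R s) = 1 := by simp [dets]

lemma dets_mul (X Y : GenMatrix R s) : dets (X * Y) = dets X * dets Y := by
  simp only [dets, mul_a, mul_b, mul_c, mul_d]; ring

lemma isUnit_iff_dets (X : GenMatrix R s) : IsUnit X ↔ IsUnit (dets X) := by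
  constructor
  · intro h
    obtain ⟨B, hB1, hB2⟩ := isUnit_iff_exists.mp h
    exact IsUnit.of_mul_eq_one (dets B) (by rw [← dets_mul, hB1, dets_one])
  · intro h
    obtain ⟨v, hv⟩ := h.exists_right_inv
    simp only [dets] at hv
    refine isUnit_iff_exists.mpr ⟨⟨v * X.d, -(v * X.b), -(v * X.c), v * X.a⟩, ?_, ?_⟩ <;>
      · ext <;> simp only [mul_a, mul_b, mul_c, mul_d, one_a, one_b, one_c, one_d] <;>
          first
          | linear_combination hv
          | ring

lemma eq_one_of_idem_isUnit {X : GenMatrix R s} (hX : X * X = X) (h : IsUnit X) : X = 1 := by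
  obtain ⟨B, hB1, hB2⟩ := isUnit_iff_exists.mp h
  calc X = X * 1 := (mul_one X).symm
    _ = X * (X * B) := by rw [hB1]
    _ = (X * X) * B := (mul_assoc X X B).symm
    _ = X * B := by rw [hX]
    _ = 1 := hB1

end GenMatrix

section LocalFacts

variable {R : Type*} [CommRing R] [IsLocalRing R]

lemma not_isUnit_of_mem {x : R} (h : x ∈ maximalIdeal R) : ¬ IsUnit x := by
  rwa [mem_maximalIdeal, mem_nonunits_iff] at h

lemma mem_of_not_isUnit {x : R} (h : ¬ IsUnit x) : x ∈ maximalIdeal R := by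
  rwa [mem_maximalIdeal, mem_nonunits_iff]

lemma isUnit_add_of_mem {u x : R} (hu : IsUnit u) (hx : x ∈ maximalIdeal R) :
    IsUnit (u + x) := by
  by_contra h
  have h2 : u + x ∈ maximalIdeal R := mem_of_not_isUnit h
  have : u ∈ maximalIdeal R := by
    have := Ideal.sub_mem _ h2 hx
    simpa using this
  exact not_isUnit_of_mem this hu

lemma isUnit_of_sub_one_mem {x : R} (h : x - 1 ∈ maximalIdeal R) : IsUnit x := by
  have := isUnit_add_of_mem isUnit_one h
  simpa using this

lemma one_not_mem_max : (1 : R) ∉ maximalIdeal R := fun h => not_isUnit_of_mem h isUnit_one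

end LocalFacts

namespace GenMatrix

variable {R : Type*} [CommRing R] [IsLocalRing R] {s : R}

@[simp] lemma sub_a (X Y : GenMatrix R s) : (X - Y).a = X.a - Y.a := by
  simp [sub_eq_add_neg]
@[simp] lemma sub_b (X Y : GenMatrix R s) : (X - Y).b = X.b - Y.b := by
  simp [sub_eq_add_neg]
@[simp] lemma sub_c (X Y : GenMatrix R s) : (X - Y).c = X.c - Y.c := by
  simp [sub_eq_add_neg]
@[simp] lemma sub_d (X Y : GenMatrix R s) : (X - Y).d = X.d - Y.d := by
  simp [sub_eq_add_neg]

/-- If the trace and `dets` of `X` are in the maximal ideal, then `X` is quasinilpotent. -/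
lemma isQuasinilpotent_of_mem (X : GenMatrix R s)
    (ht : X.a + X.d ∈ maximalIdeal R) (hw : dets X ∈ maximalIdeal R) :
    IsQuasinilpotent X := by
  intro Y hXY
  simp only [dets] at hw
  have hMM : (X * Y) * (X * Y) = (X * X) * (Y * Y) := by
    calc (X * Y) * (X * Y) = X * ((Y * X) * Y) := by rw [mul_assoc, mul_assoc]
      _ = X * ((X * Y) * Y) := by rw [hXY]
      _ = (X * X) * (Y * Y) := by rw [mul_assoc, ← mul_assoc, ← mul_assoc]
  have ha : (X * X).a ∈ maximalIdeal R := by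
    have h : (X * X).a = (X.a + X.d) * X.a - (X.a * X.d - s * (X.b * X.c)) := by
      simp only [mul_a]; ring
    rw [h]; exact Ideal.sub_mem _ (Ideal.mul_mem_right _ _ ht) hw
  have hb : (X * X).b ∈ maximalIdeal R := by
    have h : (X * X).b = (X.a + X.d) * X.b := by simp only [mul_b]; ring
    rw [h]; exact Ideal.mul_mem_right _ _ ht
  have hc : (X * X).c ∈ maximalIdeal R := by
    have h : (X * X).c = (X.a + X.d) * X.c := by simp only [mul_c]; ring
    rw [h]; exact Ideal.mul_mem_right _ _ ht
  have hd : (X * X).d ∈ maximalIdeal R := by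
    have h : (X * X).d = (X.a + X.d) * X.d - (X.a * X.d - s * (X.b * X.c)) := by
      simp only [mul_d]; ring
    rw [h]; exact Ideal.sub_mem _ (Ideal.mul_mem_right _ _ ht) hw
  set Z := (X * Y) * (X * Y) with hZ
  have h1 : Z.a ∈ maximalIdeal R := by
    rw [hMM, mul_a]
    exact Ideal.add_mem _ (Ideal.mul_mem_right _ _ ha)
      (Ideal.mul_mem_left _ _ (Ideal.mul_mem_right _ _ hb))
  have h2 : Z.b ∈ maximalIdeal R := by
    rw [hMM, mul_b]
    exact Ideal.add_mem _ (Ideal.mul_mem_right _ _ ha) (Ideal.mul_mem_right _ _ hb)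
  have h3 : Z.c ∈ maximalIdeal R := by
    rw [hMM, mul_c]
    exact Ideal.add_mem _ (Ideal.mul_mem_right _ _ hc) (Ideal.mul_mem_right _ _ hd)
  have h4 : Z.d ∈ maximalIdeal R := by
    rw [hMM, mul_d]
    exact Ideal.add_mem _ (Ideal.mul_mem_left _ _ (Ideal.mul_mem_right _ _ hc))
      (Ideal.mul_mem_right _ _ hd)
  have hV : IsUnit (1 - Z) := by
    rw [isUnit_iff_dets]
    apply isUnit_of_sub_one_mem
    have h : dets (1 - Z) - 1 = (Z.a * Z.d - s * (Z.b * Z.c)) - (Z.a + Z.d) := by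
      simp only [dets, sub_a, sub_b, sub_c, sub_d, one_a, one_b, one_c, one_d]; ring
    rw [h]
    exact Ideal.sub_mem _
      (Ideal.sub_mem _ (Ideal.mul_mem_right _ _ h1)
        (Ideal.mul_mem_left _ _ (Ideal.mul_mem_right _ _ h2)))
      (Ideal.add_mem _ h1 h4)
  obtain ⟨u, hu⟩ := hV
  set M := X * Y with hMdef
  have hMZ : Z = M * M := hZ
  have hcomm : Commute M ↑u := by
    rw [hu, hMZ]
    show M * (1 - M * M) = (1 - M * M) * M
    noncomm_ring
  have hcommi : Commute M (↑u⁻¹ : GenMatrix R s) := hcomm.units_inv_right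
  refine isUnit_iff_exists.mpr ⟨(1 - M) * ↑u⁻¹, ?_, ?_⟩
  · have key : (1 + M) * (1 - M) = 1 - M * M := by noncomm_ring
    calc (1 + M) * ((1 - M) * ↑u⁻¹) = ((1 + M) * (1 - M)) * ↑u⁻¹ := by rw [mul_assoc]
      _ = (1 - M * M) * ↑u⁻¹ := by rw [key]
      _ = ↑u * ↑u⁻¹ := by rw [hu, hMZ]
      _ = 1 := u.mul_inv
  · have key : (1 - M) * (1 + M) = 1 - M * M := by noncomm_ring
    have hcu : (↑u⁻¹ : GenMatrix R s) * (1 + M) = (1 + M) * ↑u⁻¹ := by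
      have hc1 : Commute (1 + M) ↑u := by
        rw [hu, hMZ]
        show (1 + M) * (1 - M * M) = (1 - M * M) * (1 + M)
        noncomm_ring
      exact hc1.units_inv_right.symm
    calc ((1 - M) * ↑u⁻¹) * (1 + M) = (1 - M) * (↑u⁻¹ * (1 + M)) := by rw [mul_assoc]
      _ = (1 - M) * ((1 + M) * ↑u⁻¹) := by rw [hcu]
      _ = ((1 - M) * (1 + M)) * ↑u⁻¹ := by rw [← mul_assoc]
      _ = (1 - M * M) * ↑u⁻¹ := by rw [key]
      _ = ↑u * ↑u⁻¹ := by rw [hu, hMZ]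
      _ = 1 := u.mul_inv

/-- Core construction: given a root of the characteristic polynomial, build the idempotent. -/
lemma core (A : GenMatrix R s) (al ga : R)
    (hroot : al * al - (A.a + A.d) * al + (A.a * A.d - s * (A.b * A.c)) = 0)
    (hga : ga * (2 * al - (A.a + A.d)) = 1) :
    ∃ E : GenMatrix R s, E * E = E ∧ (∀ Y, Y * A = A * Y → E * Y = Y * E) ∧
      dets (A - E) = (al - 1) * ((A.a + A.d) - al) ∧
      dets (A + E) = (al + 1) * ((A.a + A.d) - al) ∧
      (A * E).a + (A * E).d = al ∧ dets (A * E) = 0 := by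
  refine ⟨⟨ga * (al - A.d), ga * A.b, ga * A.c, ga * (al - A.a)⟩, ?_, ?_, ?_, ?_, ?_, ?_⟩
  · ext <;> simp only [mul_a, mul_b, mul_c, mul_d]
    · linear_combination (ga * (al - A.d)) * hga - (ga * ga) * hroot
    · linear_combination (ga * A.b) * hga
    · linear_combination (ga * A.c) * hga
    · linear_combination (ga * (al - A.a)) * hga - (ga * ga) * hroot
  · intro Y hy
    have h1 : (Y * A).a = (A * Y).a := by rw [hy]
    have h2 : (Y * A).b = (A * Y).b := by rw [hy]
    have h3 : (Y * A).c = (A * Y).c := by rw [hy]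
    have h4 : (Y * A).d = (A * Y).d := by rw [hy]
    simp only [mul_a, mul_b, mul_c, mul_d] at h1 h2 h3 h4
    ext <;> simp only [mul_a, mul_b, mul_c, mul_d]
    · linear_combination (-ga) * h1
    · linear_combination (-ga) * h2
    · linear_combination (-ga) * h3
    · linear_combination (-ga) * h4
  · simp only [dets, sub_a, sub_b, sub_c, sub_d]
    linear_combination (1 + ga * ga - 2 * ga) * hroot -
      ((A.a + A.d) - al) * hga
  · simp only [dets, add_a, add_b, add_c, add_d]
    linear_combination (1 + ga * ga + 2 * ga) * hroot +
      ((A.a + A.d) - al) * hga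
  · simp only [mul_a, mul_d]
    linear_combination al * hga - 2 * ga * hroot
  · simp only [dets, mul_a, mul_b, mul_c, mul_d]
    linear_combination (ga * ga * (A.a * A.d - s * (A.b * A.c))) * hroot

end GenMatrix

open GenMatrix in
/-- The pivot condition: every quadratic `x² - x + w` with `w` in the maximal ideal
has a root in the maximal ideal. -/
def CondC (R : Type*) [CommRing R] [IsLocalRing R] : Prop :=
  ∀ w ∈ maximalIdeal R, ∃ al ∈ maximalIdeal R, al * al - al + w = 0

section Constructions

variable {R : Type*} [CommRing R] [IsLocalRing R] {s : R}

lemma CondC.root_data (hC : CondC R) {w t : R} (hw : w ∈ maximalIdeal R) (ht : IsUnit t) :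
    ∃ al ∈ maximalIdeal R, al * al - t * al + w = 0 := by
  obtain ⟨v, hv⟩ := ht.exists_right_inv
  obtain ⟨y, hy, hyeq⟩ := hC (w * (v * v)) (Ideal.mul_mem_right _ _ hw)
  refine ⟨t * y, Ideal.mul_mem_left _ _ hy, ?_⟩
  linear_combination (t * t) * hyeq - (w * (t * v + 1)) * hv

namespace GenMatrix

/-- All the data for the nontrivial case: trace a unit, `dets` in the maximal ideal. -/
lemma main_case (hC : CondC R) (A : GenMatrix R s)
    (hw : dets A ∈ maximalIdeal R) (ht : IsUnit (A.a + A.d)) :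
    ∃ E : GenMatrix R s, E * E = E ∧ (∀ Y, Y * A = A * Y → E * Y = Y * E) ∧
      IsUnit (A - E) ∧ IsUnit (A + E) ∧
      (A * E).a + (A * E).d ∈ maximalIdeal R ∧ dets (A * E) ∈ maximalIdeal R := by
  set t := A.a + A.d with htdef
  obtain ⟨al, hal, hroot⟩ := hC.root_data hw ht
  simp only [dets] at hroot
  have hga' : IsUnit (2 * al - t) := by
    have h := (isUnit_add_of_mem ht (neg_mem (Ideal.mul_mem_left _ 2 hal))).neg
    have e : -(t + -(2 * al)) = 2 * al - t := by ring
    rwa [e] at h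
  obtain ⟨ga, hga⟩ := hga'.exists_left_inv
  obtain ⟨E, hEE, hEcomm, hdetsub, hdetadd, htr, hdets0⟩ := core A al ga hroot hga
  have hu1 : IsUnit (al - 1) := by
    have h := isUnit_add_of_mem isUnit_one.neg hal
    have e : (-1 : R) + al = al - 1 := by ring
    rwa [e] at h
  have hu2 : IsUnit (t - al) := by
    have h := isUnit_add_of_mem ht (neg_mem hal)
    have e : t + -al = t - al := by ring
    rwa [e] at h
  have hu3 : IsUnit (al + 1) := by
    have h := isUnit_add_of_mem isUnit_one hal
    have e : (1 : R) + al = al + 1 := by ring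
    rwa [e] at h
  refine ⟨E, hEE, hEcomm, ?_, ?_, ?_, ?_⟩
  · rw [isUnit_iff_dets, hdetsub]; exact hu1.mul hu2
  · rw [isUnit_iff_dets, hdetadd]; exact hu3.mul hu2
  · rw [htr]; exact hal
  · rw [hdets0]; exact Ideal.zero_mem _

lemma sc_of_condC (hC : CondC R) (s : R) : IsStronglyCleanRing (GenMatrix R s) := by
  intro A
  by_cases hA : IsUnit (dets A)
  · exact ⟨0, A, by simp [IsIdempotentElem], (isUnit_iff_dets A).mpr hA,
      (zero_add A).symm, by rw [zero_mul, mul_zero]⟩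
  · have hw : dets A ∈ maximalIdeal R := mem_of_not_isUnit hA
    by_cases ht : IsUnit (A.a + A.d)
    · obtain ⟨E, hEE, hEcomm, hsub, -, -, -⟩ := main_case hC A hw ht
      refine ⟨E, A - E, hEE, hsub, by abel, ?_⟩
      have hEA : E * A = A * E := hEcomm A rfl
      calc E * (A - E) = E * A - E * E := by rw [mul_sub]
        _ = A * E - E * E := by rw [hEA]
        _ = (A - E) * E := by rw [sub_mul]
    · have htm : A.a + A.d ∈ maximalIdeal R := mem_of_not_isUnit ht
      refine ⟨1, A - 1, IsIdempotentElem.one, ?_, by abel, by rw [one_mul, mul_one]⟩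
      rw [isUnit_iff_dets]
      apply isUnit_of_sub_one_mem
      have h : dets (A - 1) - 1 = dets A - (A.a + A.d) := by
        simp only [dets, sub_a, sub_b, sub_c, sub_d, one_a, one_b, one_c, one_d]; ring
      rw [h]
      exact Ideal.sub_mem _ hw htm

lemma qp_of_condC (hC : CondC R) (s : R) : IsQuasipolarRing (GenMatrix R s) := by
  intro A
  by_cases hA : IsUnit (dets A)
  · refine ⟨0, by simp [IsIdempotentElem], fun y _ => by rw [zero_mul, mul_zero], ?_, ?_⟩
    · rw [add_zero]; exact (isUnit_iff_dets A).mpr hA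
    · rw [mul_zero]
      intro x hx
      rw [zero_mul, add_zero]
      exact isUnit_one
  · have hw : dets A ∈ maximalIdeal R := mem_of_not_isUnit hA
    by_cases ht : IsUnit (A.a + A.d)
    · obtain ⟨E, hEE, hEcomm, -, hadd, htr, hd0⟩ := main_case hC A hw ht
      exact ⟨E, hEE, fun y hy => hEcomm y hy, hadd, isQuasinilpotent_of_mem _ htr hd0⟩
    · have htm : A.a + A.d ∈ maximalIdeal R := mem_of_not_isUnit ht
      refine ⟨1, IsIdempotentElem.one, fun y _ => by rw [one_mul, mul_one], ?_, ?_⟩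
      · rw [isUnit_iff_dets]
        apply isUnit_of_sub_one_mem
        have h : dets (A + 1) - 1 = dets A + (A.a + A.d) := by
          simp only [dets, add_a, add_b, add_c, add_d, one_a, one_b, one_c, one_d]; ring
        rw [h]
        exact Ideal.add_mem _ hw htm
      · rw [mul_one]
        exact isQuasinilpotent_of_mem A htm hw

end GenMatrix

end Constructions

section Extraction

open GenMatrix

variable {R : Type*} [CommRing R] [IsLocalRing R] {s : R}

namespace GenMatrix

lemma trace_sub_one_mem (E : GenMatrix R s) (hEE : E * E = E)
    (hE0 : E ≠ 0) (hE1 : E ≠ 1) : E.a + E.d - 1 ∈ maximalIdeal R := by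
  have hdE : dets E ∈ maximalIdeal R := by
    apply mem_of_not_isUnit
    intro h
    exact hE1 (eq_one_of_idem_isUnit hEE ((isUnit_iff_dets E).mpr h))
  have h1E : dets (1 - E) ∈ maximalIdeal R := by
    apply mem_of_not_isUnit
    intro h
    have hidem : (1 - E) * (1 - E) = 1 - E := by
      have h2 : (1 - E) * (1 - E) = 1 - E - E + E * E := by
        simp only [sub_mul, mul_sub, one_mul, mul_one]; abel
      rw [h2, hEE]; abel
    have h3 := eq_one_of_idem_isUnit hidem ((isUnit_iff_dets _).mpr h)
    apply hE0
    have h4 : E = 1 - (1 - E) := by abel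
    rw [h4, h3]; abel
  have h : E.a + E.d - 1 = dets E - dets (1 - E) := by
    simp only [dets, sub_a, sub_b, sub_c, sub_d, one_a, one_b, one_c, one_d]; ring
  rw [h]; exact Ideal.sub_mem _ hdE h1E

lemma extract {c w : R} (hsc : s * c = -w) (hw : w ∈ maximalIdeal R)
    (E : GenMatrix R s) (hEE : E * E = E) (hE0 : E ≠ 0) (hE1 : E ≠ 1)
    (hcomm : E * (⟨0, 1, c, 1⟩ : GenMatrix R s) = (⟨0, 1, c, 1⟩ : GenMatrix R s) * E) :
    ∃ al ∈ maximalIdeal R, al * al - al + w = 0 := by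
  have hp : (maximalIdeal R).IsPrime := inferInstance
  -- entry equations of the commutation relation
  have hb : (E * (⟨0, 1, c, 1⟩ : GenMatrix R s)).b = ((⟨0, 1, c, 1⟩ : GenMatrix R s) * E).b := by
    rw [hcomm]
  have hc : (E * (⟨0, 1, c, 1⟩ : GenMatrix R s)).c = ((⟨0, 1, c, 1⟩ : GenMatrix R s) * E).c := by
    rw [hcomm]
  simp only [mul_b, mul_c] at hb hc
  -- hb : E.a * 1 + E.b * 1 = 0 * E.b + 1 * E.d
  -- hc : E.c * 0 + E.d * c = c * E.a + 1 * E.c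
  have hgf : E.c = c * E.b := by linear_combination -hc - c * hb
  -- idempotency entries
  have ha2 : (E * E).a = E.a := by rw [hEE]
  have hb2 : (E * E).b = E.b := by rw [hEE]
  have hd2 : (E * E).d = E.d := by rw [hEE]
  simp only [mul_a, mul_b, mul_d] at ha2 hb2 hd2
  have htr1 : E.a + E.d - 1 ∈ maximalIdeal R := trace_sub_one_mem E hEE hE0 hE1
  -- E.b is a unit
  have hfunit : IsUnit E.b := by
    by_contra hf
    have hfm := mem_of_not_isUnit hf
    have he2 : E.a * (E.a - 1) = w * (E.b * E.b) - s * (E.b * (E.c - c * E.b)) := by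
      linear_combination ha2 - E.b * E.b * hsc
    have he2m : E.a * (E.a - 1) ∈ maximalIdeal R := by
      rw [he2, hgf]
      simp only [sub_self, mul_zero, sub_zero]
      exact Ideal.mul_mem_right _ _ hw
    rcases hp.mem_or_mem he2m with hem | hem1
    · have hdm : E.d ∈ maximalIdeal R := by
        have h1 : E.d = E.a + E.b := by linear_combination -hb
        rw [h1]; exact Ideal.add_mem _ hem hfm
      have : (1 : R) ∈ maximalIdeal R := by
        have h3 : (1 : R) = (E.a + E.d) - (E.a + E.d - 1) := by ring
        rw [h3]
        exact Ideal.sub_mem _ (Ideal.add_mem _ hem hdm) htr1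
      exact one_not_mem_max this
    · have hdm : E.d - 1 ∈ maximalIdeal R := by
        have h1 : E.d - 1 = (E.a - 1) + E.b := by linear_combination -hb
        rw [h1]; exact Ideal.add_mem _ hem1 hfm
      have : (1 : R) ∈ maximalIdeal R := by
        have h3 : (1 : R) = (E.a + E.d - 1) - ((E.a - 1) + (E.d - 1)) := by ring
        rw [h3]
        exact Ideal.sub_mem _ htr1 (Ideal.add_mem _ hem1 hdm)
      exact one_not_mem_max this
  obtain ⟨v, hv⟩ := hfunit.exists_left_inv
  -- trace of E is one
  have heh1 : E.a + E.d = 1 := by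
    linear_combination v * hb2 - (E.a + E.d - 1) * hv
  have hf2 : E.b = 2 * E.d - 1 := by linear_combination hb - heh1
  have hkey : E.d * E.d - E.d * E.b + w * (E.b * E.b) = 0 := by
    linear_combination (E.b * E.b) * hsc + (s * E.b) * hgf - hd2 - E.d * hf2
  have hroot2 : (E.d * v) * (E.d * v) - (E.d * v) + w = 0 := by
    linear_combination (v * v) * hkey + (E.d * v - w - w * (E.b * v)) * hv
  have hehm : E.a * E.d ∈ maximalIdeal R := by
    have h1 : E.a * E.d = -(w * (E.b * E.b)) := by
      linear_combination (E.b * E.b) * hsc + (s * E.b) * hgf - hd2 + E.d * heh1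
    rw [h1]
    exact neg_mem (Ideal.mul_mem_right _ _ hw)
  rcases hp.mem_or_mem hehm with hem | hhm
  · refine ⟨1 - E.d * v, ?_, ?_⟩
    · have h1 : (1 : R) - E.d * v = -(E.a * v) := by
        linear_combination -hv + v * hf2 + v * heh1
      rw [h1]
      exact neg_mem (Ideal.mul_mem_right _ _ hem)
    · linear_combination hroot2
  · exact ⟨E.d * v, Ideal.mul_mem_right _ _ hhm, hroot2⟩

lemma dets_companion {c w : R} (hsc : s * c = -w) :
    dets (⟨0, 1, c, 1⟩ : GenMatrix R s) = w := by
  simp only [dets]; linear_combination -hsc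

lemma dets_companion_sub_one {c w : R} (hsc : s * c = -w) :
    dets ((⟨0, 1, c, 1⟩ : GenMatrix R s) - 1) = w := by
  simp only [dets, sub_a, sub_b, sub_c, sub_d, one_a, one_b, one_c, one_d]
  linear_combination -hsc

lemma condC_of_sc {c w : R} (hsc : s * c = -w) (hw : w ∈ maximalIdeal R)
    (h : IsStronglyCleanRing (GenMatrix R s)) :
    ∃ al ∈ maximalIdeal R, al * al - al + w = 0 := by
  set A : GenMatrix R s := ⟨0, 1, c, 1⟩ with hA
  obtain ⟨E, u, hEidem, hu, hAeu, hcomm⟩ := h A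
  have hE0 : E ≠ 0 := by
    intro h0
    have hAu : A = u := by rw [hAeu, h0, zero_add]
    have : IsUnit (dets A) := (isUnit_iff_dets A).mp (by rw [hAu]; exact hu)
    rw [hA, dets_companion hsc] at this
    exact not_isUnit_of_mem hw this
  have hE1 : E ≠ 1 := by
    intro h1
    have hAu : A - 1 = u := by rw [hAeu, h1]; abel
    have : IsUnit (dets (A - 1)) := (isUnit_iff_dets _).mp (by rw [hAu]; exact hu)
    rw [hA, dets_companion_sub_one hsc] at this
    exact not_isUnit_of_mem hw this
  have hcommA : E * A = A * E := by
    calc E * A = E * E + E * u := by rw [hAeu, mul_add, hEidem.eq]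
      _ = E * E + u * E := by rw [hcomm]
      _ = A * E := by rw [hAeu, add_mul]
  exact extract hsc hw E hEidem.eq hE0 hE1 hcommA

lemma condC_of_qp (h : IsQuasipolarRing (GenMatrix R (1 : R))) : CondC R := by
  intro w hw
  have hsc : (1 : R) * (-w) = -w := one_mul _
  set A : GenMatrix R (1 : R) := ⟨0, 1, -w, 1⟩ with hA
  obtain ⟨p, hpidem, hpcomm, hpunit, hpqn⟩ := h A
  have hp0 : p ≠ 0 := by
    intro h0
    rw [h0, add_zero] at hpunit
    have : IsUnit (dets A) := (isUnit_iff_dets A).mp hpunit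
    rw [hA, dets_companion hsc] at this
    exact not_isUnit_of_mem hw this
  have hp1 : p ≠ 1 := by
    intro h1
    rw [h1, mul_one] at hpqn
    have hx : A * (-1) = (-1) * A := by rw [mul_neg_one, neg_one_mul]
    have hun := hpqn (-1) hx
    have he : (1 : GenMatrix R (1 : R)) + A * (-1) = 1 - A := by
      rw [mul_neg_one, sub_eq_add_neg]
    rw [he] at hun
    have : IsUnit (dets (1 - A)) := (isUnit_iff_dets _).mp hun
    have hd : dets ((1 : GenMatrix R (1 : R)) - A) = w := by
      rw [hA]
      simp only [dets, sub_a, sub_b, sub_c, sub_d, one_a, one_b, one_c, one_d]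
      ring
    rw [hd] at this
    exact not_isUnit_of_mem hw this
  exact extract hsc hw p hpidem hp0 hp1 (hpcomm A rfl)

lemma condC_of_sc_one (h : IsStronglyCleanRing (GenMatrix R (1 : R))) : CondC R :=
  fun w hw => condC_of_sc (c := -w) (one_mul _) hw h

lemma condC_of_jac (h : ∀ s ∈ JacobsonRadical R, IsStronglyCleanRing (GenMatrix R s)) :
    CondC R := by
  intro w hw
  have hmem : -w ∈ JacobsonRadical R := by
    show -w ∈ (⊥ : Ideal R).jacobson
    rw [jacobson_eq_maximalIdeal ⊥ bot_ne_top]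
    exact neg_mem hw
  exact condC_of_sc (s := -w) (c := 1) (by ring) hw (h (-w) hmem)

end GenMatrix

end Extraction

end Aux


/-- for a commutative local ring `R`, the following are equivalent:
(1) `K_1(R) = M₂(R)` is quasipolar; (2) `K_1(R)` is strongly clean; (3) `K_s(R)` is
strongly clean for all `s ∈ R`; (4) `K_s(R)` is strongly clean for all `s ∈ J(R)`. -/
theorem genMatrix_one_quasipolar_tfae {R : Type*} [CommRing R] [IsLocalRing R] :
    List.TFAE
      [IsQuasipolarRing (GenMatrix R (1 : R)),
       IsStronglyCleanRing (GenMatrix R (1 : R)),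
       ∀ s : R, IsStronglyCleanRing (GenMatrix R s),
       ∀ s ∈ JacobsonRadical R, IsStronglyCleanRing (GenMatrix R s)] := by
  tfae_have 1 → 3
  | h => fun s => GenMatrix.sc_of_condC (GenMatrix.condC_of_qp h) s
  tfae_have 3 → 2
  | h => h 1
  tfae_have 2 → 4
  | h => fun s _ => GenMatrix.sc_of_condC (GenMatrix.condC_of_sc_one h) s
  tfae_have 4 → 1
  | h => GenMatrix.qp_of_condC (GenMatrix.condC_of_jac h) 1
  tfae_finish
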